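/- Let p be a prime number, R a commutative ring, and 𝔞 ⊆ R an ideal equipped with a divided power structure, such that p·x = 0 for every x ∈ 𝔞. Then for every y ∈ 𝕎 R all of whose coefficients lie in 𝔞: (1) p·y = 0 in 𝕎 R; (2) verschiebung(z)·y = 0 for every z ∈ 𝕎 R. Equivalently, (p·𝕎(R) + V(𝕎(R)))·W(𝔞) = 0, where W(𝔞) denotes the set of Witt vectors with all coefficients in 𝔞. -/

import Mathlib

open MvPolynomial WittVector

private lemma aux_aeval_mem {R : Type*} [CommRing R] (𝔞 : Ideal R) (v : ℕ → R)
    (hv : ∀ i, v i ∈ 𝔞) (φ : MvPolynomial ℕ ℤ) (hφ : constantCoeff φ = 0) :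
    aeval v φ ∈ 𝔞 := by
  rw [φ.as_sum, map_sum]
  refine Ideal.sum_mem _ fun m hm => ?_
  rw [aeval_monomial]
  have hm0 : m ≠ 0 := by
    rintro rfl
    exact (MvPolynomial.mem_support_iff.1 hm) hφ
  obtain ⟨i, hi⟩ := Finsupp.ne_iff.1 hm0
  simp only [Finsupp.coe_zero, Pi.zero_apply] at hi
  have hiS : i ∈ m.support := Finsupp.mem_support_iff.2 hi
  have : m.prod (fun i k => v i ^ k) ∈ 𝔞 := by
    rw [Finsupp.prod, ← Finset.mul_prod_erase m.support _ hiS]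
    exact Ideal.mul_mem_right _ _ (Ideal.pow_mem_of_mem 𝔞 (hv i) _ (Nat.pos_of_ne_zero hi))
  exact Ideal.mul_mem_left _ _ this

private lemma aux_constantCoeff_frobeniusPolyAux (p : ℕ) [Fact p.Prime] (n : ℕ) :
    constantCoeff (frobeniusPolyAux p n) = 0 := by
  have h : constantCoeff (frobeniusPoly p n) = 0 := by
    have h0 : WittVector.frobenius (0 : WittVector p ℤ) = 0 :=
      map_zero (WittVector.frobenius : WittVector p ℤ →+* WittVector p ℤ)
    have := congrArg (fun x : WittVector p ℤ => x.coeff n) h0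
    simp only [WittVector.coeff_frobenius, WittVector.zero_coeff] at this
    have hc : (0 : WittVector p ℤ).coeff = (0 : ℕ → ℤ) := funext fun k => WittVector.zero_coeff p ℤ k
    rw [hc, MvPolynomial.aeval_zero] at this
    simpa using this
  have := h
  rw [frobeniusPoly, map_add, map_mul, map_pow, constantCoeff_X, constantCoeff_C] at this
  rw [zero_pow (Fact.out : p.Prime).ne_zero, zero_add] at this
  have hp : (p : ℤ) ≠ 0 := Nat.cast_ne_zero.2 (Fact.out : p.Prime).ne_zero
  exact (mul_eq_zero.1 this).resolve_left hp

/-- Let `𝔞` be an ideal of `R` with a divided power structure, with `p·𝔞 = 0`. Then every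
`p`-typical Witt vector `y` all of whose coefficients lie in `𝔞` satisfies `p·y = 0` and
`V(z)·y = 0` for all `z`; i.e. `(p·𝕎(R) + V(𝕎(R)))·W(𝔞) = 0`. -/
theorem stmt13 (p : ℕ) [Fact p.Prime] (R : Type*) [CommRing R]
    (𝔞 : Ideal R) (γ : DividedPowers 𝔞) (hp𝔞 : ∀ x ∈ 𝔞, (p : R) * x = 0)
    (y : WittVector p R) (hy : ∀ k, y.coeff k ∈ 𝔞) :
    (p : WittVector p R) * y = 0 ∧
      ∀ z : WittVector p R, WittVector.verschiebung z * y = 0 := by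
  -- every element of 𝔞 has vanishing p-th power
  have hpow : ∀ x ∈ 𝔞, x ^ p = 0 := by
    intro x hx
    have h1 : ((p.factorial : ℕ) : R) * γ.dpow p x = x ^ p := γ.factorial_mul_dpow_eq_pow hx
    have hfac : p * (p - 1).factorial = p.factorial :=
      Nat.mul_factorial_pred (Fact.out : p.Prime).ne_zero
    rw [← hfac] at h1
    push_cast at h1
    have h2 : x ^ p = (p : R) * (((p - 1).factorial : R) * γ.dpow p x) := by
      rw [← h1]; ring
    have hmem : ((p - 1).factorial : R) * γ.dpow p x ∈ 𝔞 :=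
      Ideal.mul_mem_left _ _ (γ.dpow_mem (Fact.out : p.Prime).ne_zero hx)
    rw [h2, hp𝔞 _ hmem]
  -- frobenius kills Witt vectors with coefficients in 𝔞
  have hF : ∀ w : WittVector p R, (∀ k, w.coeff k ∈ 𝔞) → WittVector.frobenius w = 0 := by
    intro w hw
    ext n
    rw [WittVector.coeff_frobenius, WittVector.zero_coeff, frobeniusPoly, map_add, map_mul,
      map_pow, aeval_X, aeval_C]
    have hA : aeval w.coeff (frobeniusPolyAux p n) ∈ 𝔞 :=
      aux_aeval_mem 𝔞 w.coeff hw _ (aux_constantCoeff_frobeniusPolyAux p n)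
    rw [hpow _ (hw n), algebraMap_int_eq, eq_intCast, Int.cast_natCast, hp𝔞 _ hA, add_zero]
  have hVy : ∀ k, (WittVector.verschiebung y).coeff k ∈ 𝔞 := by
    rintro (_ | k)
    · rw [WittVector.verschiebung_coeff_zero]; exact 𝔞.zero_mem
    · rw [WittVector.verschiebung_coeff_succ]; exact hy k
  constructor
  · rw [mul_comm, ← WittVector.frobenius_verschiebung, hF _ hVy]
  · intro z
    rw [← WittVector.verschiebung_mul_frobenius, hF _ hy, mul_zero, map_zero]
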